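/- Let Z be a CAT(1) space with mutually opposite suspenders p₀,q₀ and also mutually opposite suspenders p₁,q₁, with 0 < d(p₀,p₁) < π. Then the set C₁ = p₀p₁ ∪ p₁q₀ ∪ q₀q₁ ∪ q₁p₀ (the union of the four geodesics) is isometric to the round circle S¹ of circumference 2π; in particular, for distinct i,j ∈ {0,1}, the concatenations p_ip_j ∪ p_jq_i and p_iq_j ∪ q_jq_i are geodesics of length π from p_i to q_i. -/
import Mathlib


open Real Metric

/-- A metric space is `CAT(1)` if every pair of points at distance `< π` has a midpoint
satisfying the spherical comparison (CN-type) inequality against triangles of perimeter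
`< 2π` in the unit sphere. -/
def IsCATOne (Z : Type*) [MetricSpace Z] : Prop :=
  ∀ x y : Z, dist x y < π →
    ∃ m : Z, dist x m = dist x y / 2 ∧ dist m y = dist x y / 2 ∧
      ∀ p : Z, dist p x + dist x y + dist y p < 2 * π →
        (Real.cos (dist p x) + Real.cos (dist p y)) / 2 ≤
          Real.cos (dist p m) * Real.cos (dist x y / 2)

/-- `γ` is a (unit-speed) geodesic on the interval `[a,b]`. -/
def IsGeodesic {Z : Type*} [MetricSpace Z] (γ : ℝ → Z) (a b : ℝ) : Prop :=
  ∀ s ∈ Set.Icc a b, ∀ t ∈ Set.Icc a b, dist (γ s) (γ t) = |s - t|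

lemma le_of_cos_le_cos {x y : ℝ} (hx : 0 ≤ x) (hy : y ≤ π) (h : Real.cos x ≤ Real.cos y) :
    y ≤ x := by
  by_contra hc
  push_neg at hc
  exact absurd h (not_le.mpr (Real.cos_lt_cos_of_nonneg_of_le_pi hx hy hc))

lemma two_sin_mul_cos (A B : ℝ) :
    2 * Real.sin A * Real.cos B = Real.sin (A + B) + Real.sin (A - B) := by
  rw [Real.sin_add, Real.sin_sub]; ring

lemma sin_pi_div_two_add' (x : ℝ) : Real.sin (π / 2 + x) = Real.cos x := by
  rw [Real.sin_add]; simp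

lemma sin_sub_pi_div_two' (x : ℝ) : Real.sin (x - π / 2) = -Real.cos x := by
  rw [Real.sin_sub]; simp

lemma cos_diff_prod (p q : ℝ) :
    Real.cos p - Real.cos q = 2 * Real.sin ((q + p) / 2) * Real.sin ((q - p) / 2) := by
  rw [Real.cos_sub_cos]
  have h1 : (p - q) / 2 = -((q - p)/2) := by ring
  rw [h1, Real.sin_neg]
  have h2 : (p + q) / 2 = (q + p) / 2 := by ring
  rw [h2]; ring

/-- The key direct estimate (`case I'`).  Poles `P₀,Q₀` and `P₁,Q₁` are mutually
opposite suspenders, `a = d(P₀,P₁)`, `x` lies "between `P₀` and `P₁`" at distance `s`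
from `P₀`, `y` lies "between `Q₀` and `Q₁`" at distance `u` from `Q₀`.  If moreover
`u < a` and `a + u ≤ π`, then `d(x,y) ≥ π - |u - s|`. -/
lemma lemA {Z : Type*} [MetricSpace Z] (hZ : IsCATOne Z) (P₀ Q₀ P₁ Q₁ x y : Z)
    (h₀ : ∀ z : Z, dist P₀ z + dist z Q₀ = π)
    (h₁ : ∀ z : Z, dist P₁ z + dist z Q₁ = π)
    (ha1 : dist P₀ P₁ < π)
    (hx : dist P₁ x = dist P₀ P₁ - dist P₀ x)
    (hy : dist Q₁ y = dist P₀ P₁ - dist Q₀ y)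
    (hu : dist Q₀ y < dist P₀ P₁)
    (hau : dist P₀ P₁ + dist Q₀ y ≤ π) :
    π - |dist Q₀ y - dist P₀ x| ≤ dist x y := by
  obtain ⟨a, hadef⟩ : ∃ a, dist P₀ P₁ = a := ⟨_, rfl⟩
  obtain ⟨s, hsdef⟩ : ∃ s, dist P₀ x = s := ⟨_, rfl⟩
  obtain ⟨u, hudef⟩ : ∃ u, dist Q₀ y = u := ⟨_, rfl⟩
  simp only [hadef, hsdef, hudef] at hx hy hu hau ha1 ⊢
  have hs0 : 0 ≤ s := hsdef ▸ dist_nonneg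
  have hu0 : 0 ≤ u := hudef ▸ dist_nonneg
  have hsa : s ≤ a := by
    have := dist_nonneg (x := P₁) (y := x); rw [hx] at this; linarith
  have ha0 : 0 < a := lt_of_le_of_lt hu0 hu
  -- derived suspender distances
  have hP0y : dist P₀ y = π - u := by
    have := h₀ y; rw [dist_comm y Q₀, hudef] at this; linarith
  have hP1y : dist P₁ y = π - (a - u) := by
    have := h₁ y; rw [dist_comm y Q₁, hy] at this; linarith
  have hQ1P0 : dist Q₁ P₀ = π - a := by
    have := h₁ P₀; rw [dist_comm P₁ P₀, hadef] at this
    rw [dist_comm Q₁ P₀]; linarith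
  have hQ0P1 : dist Q₀ P₁ = π - a := by
    have := h₀ P₁; rw [hadef] at this
    rw [dist_comm Q₀ P₁]; linarith
  -- by contradiction
  by_contra hcon
  push_neg at hcon
  obtain ⟨D, hDdef⟩ : ∃ D, dist x y = D := ⟨_, rfl⟩
  rw [hDdef] at hcon
  have hD0 : 0 ≤ D := hDdef ▸ dist_nonneg
  have habs1 : u - s ≤ |u - s| := le_abs_self _
  have habs2 : s - u ≤ |u - s| := by rw [abs_sub_comm]; exact le_abs_self _
  have habsle : |u - s| ≤ π := by
    rw [abs_le]; constructor <;> nlinarith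
  -- midpoint of P₁ and y
  have hP1ylt : dist P₁ y < π := by rw [hP1y]; linarith
  obtain ⟨m, hm1, hm2, hcomp⟩ := hZ P₁ y hP1ylt
  have hhalf : dist P₁ y / 2 = (π - (a - u)) / 2 := by rw [hP1y]
  have hcoshalf : Real.cos (dist P₁ y / 2) = Real.sin ((a - u) / 2) := by
    rw [hhalf, show (π - (a - u)) / 2 = π / 2 - (a - u) / 2 by ring,
      Real.cos_pi_div_two_sub]
  have hsinpos : 0 < Real.sin ((a - u) / 2) :=
    Real.sin_pos_of_pos_of_lt_pi (by linarith) (by nlinarith [Real.pi_pos])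
  -- comparison with p = Q₀
  have hper1 : dist Q₀ P₁ + dist P₁ y + dist y Q₀ < 2 * π := by
    rw [hQ0P1, hP1y, dist_comm y Q₀, hudef]; linarith
  have hc1 := hcomp Q₀ hper1
  rw [hQ0P1] at hc1
  -- hc1 : (cos (π-a) + cos (dist Q₀ y))/2 ≤ cos (dist Q₀ m) * cos(dist P₁ y / 2)
  rw [hcoshalf, Real.cos_pi_sub, hudef] at hc1
  -- deduce sin((a+u)/2) ≤ cos (dist Q₀ m)
  have hprod : Real.cos u - Real.cos a
      = 2 * Real.sin ((a + u) / 2) * Real.sin ((a - u) / 2) := by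
    have := cos_diff_prod u a; rw [this]
  have hQ0mcos : Real.sin ((a + u) / 2) ≤ Real.cos (dist Q₀ m) := by
    nlinarith [hc1, hprod, hsinpos]
  have hQmpi : dist Q₀ m ≤ π := by
    have := h₀ m; rw [dist_comm m Q₀] at this
    have := dist_nonneg (x := P₀) (y := m); linarith
  have hQ0mle : dist Q₀ m ≤ (π - a - u) / 2 := by
    refine le_of_cos_le_cos (by linarith) hQmpi ?_
    rw [show (π - a - u)/2 = π/2 - (a+u)/2 by ring, Real.cos_pi_div_two_sub]
    exact hQ0mcos
  have hP0m : (π + a + u) / 2 ≤ dist P₀ m := by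
    have := h₀ m; rw [dist_comm m Q₀] at this; linarith
  -- lower bound for dist x m
  have hxmlb : (π + a + u) / 2 - s ≤ dist x m := by
    have htri : dist P₀ m ≤ dist P₀ x + dist x m := dist_triangle _ _ _
    rw [hsdef] at htri; linarith
  have hxmub : dist x m ≤ π := by
    have htri : dist x m ≤ dist x P₁ + dist P₁ m := dist_triangle _ _ _
    rw [dist_comm x P₁, hx, hm1, hP1y] at htri; linarith
  have hX0 : 0 ≤ (π + a + u) / 2 - s := by linarith
  have hcosxm : Real.cos (dist x m) ≤ Real.cos ((π + a + u) / 2 - s) :=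
    Real.cos_le_cos_of_nonneg_of_le_pi hX0 hxmub hxmlb
  -- comparison with p = x
  have hper2 : dist x P₁ + dist P₁ y + dist y x < 2 * π := by
    rw [dist_comm x P₁, hx, hP1y, dist_comm y x, hDdef]; linarith
  have hc2 := hcomp x hper2
  rw [dist_comm x P₁, hx, hDdef, hcoshalf] at hc2
  -- trig identity
  have htrig : 2 * Real.sin ((a - u) / 2) * Real.cos ((π + a + u) / 2 - s)
      = Real.cos (a - s) - Real.cos (s - u) := by
    rw [two_sin_mul_cos,
      show (a - u) / 2 + ((π + a + u) / 2 - s) = π / 2 + (a - s) by ring,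
      show (a - u) / 2 - ((π + a + u) / 2 - s) = (s - u) - π / 2 by ring,
      sin_pi_div_two_add', sin_sub_pi_div_two']
    ring
  have hfin : Real.cos D ≤ Real.cos (π - |u - s|) := by
    rw [Real.cos_pi_sub]
    have h1 : (Real.cos (a - s) + Real.cos D) / 2
        ≤ Real.cos ((π + a + u) / 2 - s) * Real.sin ((a - u) / 2) := by
      calc (Real.cos (a - s) + Real.cos D) / 2
          ≤ Real.cos (dist x m) * Real.sin ((a - u) / 2) := hc2
        _ ≤ Real.cos ((π + a + u) / 2 - s) * Real.sin ((a - u) / 2) := by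
            exact mul_le_mul_of_nonneg_right hcosxm (le_of_lt hsinpos)
    have hcomm : Real.cos ((π + a + u) / 2 - s) * Real.sin ((a - u) / 2)
        = Real.sin ((a - u) / 2) * Real.cos ((π + a + u) / 2 - s) := mul_comm _ _
    have h2 : Real.cos (a - s) + Real.cos D ≤ Real.cos (a - s) - Real.cos (s - u) := by
      linarith [h1, htrig, hcomm]
    have h3 : Real.cos |u - s| = Real.cos (s - u) := by
      rw [← Real.cos_abs (s-u), abs_sub_comm s u]
    linarith [h2, h3.ge, h3.le]
  have : Real.cos (π - |u - s|) < Real.cos D :=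
    Real.cos_lt_cos_of_nonneg_of_le_pi hD0 (by linarith) hcon
  linarith

set_option maxHeartbeats 1000000 in
lemma core_lb {Z : Type*} [MetricSpace Z] (hZ : IsCATOne Z) (P₀ Q₀ P₁ Q₁ : Z)
    (h₀ : ∀ z : Z, dist P₀ z + dist z Q₀ = π)
    (h₁ : ∀ z : Z, dist P₁ z + dist z Q₁ = π)
    (ha0 : 0 < dist P₀ P₁) (ha1 : dist P₀ P₁ < π) :
    ∀ n : ℕ, ∀ x y : Z,
      dist P₁ x = dist P₀ P₁ - dist P₀ x →
      dist Q₁ y = dist P₀ P₁ - dist Q₀ y →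
      dist P₀ x ≤ n * ((π - dist P₀ P₁) / 2) →
      π - |dist Q₀ y - dist P₀ x| ≤ dist x y := by
  -- preliminary suspender identities
  have hQQ : dist Q₀ Q₁ = dist P₀ P₁ := by
    have h1 := h₁ Q₀
    have h2 := h₀ P₁
    linarith
  have h₀' : ∀ z : Z, dist Q₀ z + dist z P₀ = π := by
    intro z; rw [dist_comm Q₀ z, dist_comm z P₀]; linarith [h₀ z]
  have h₁' : ∀ z : Z, dist Q₁ z + dist z P₁ = π := by
    intro z; rw [dist_comm Q₁ z, dist_comm z P₁]; linarith [h₁ z]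
  intro n
  induction n with
  | zero =>
    intro x y hx hy hs
    have hs0 : dist P₀ x = 0 := le_antisymm (by simpa using hs) dist_nonneg
    have hP0y : dist P₀ y = π - dist Q₀ y := by
      have := h₀ y; rw [dist_comm y Q₀] at this; linarith
    have htri : dist P₀ y ≤ dist P₀ x + dist x y := dist_triangle _ _ _
    rw [hs0, sub_zero, abs_of_nonneg dist_nonneg]
    rw [hs0] at htri
    linarith
  | succ n ih =>
    intro x y hx hy hs
    have hs0 : 0 ≤ dist P₀ x := dist_nonneg
    have hu0 : 0 ≤ dist Q₀ y := dist_nonneg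
    have hsa : dist P₀ x ≤ dist P₀ P₁ := by
      have := dist_nonneg (x := P₁) (y := x); linarith [hx]
    have hua : dist Q₀ y ≤ dist P₀ P₁ := by
      have := dist_nonneg (x := Q₁) (y := y); linarith [hy]
    by_cases hd : 2 * dist P₀ P₁ - π ≤ dist P₀ x ∧ 0 < dist P₀ x
    · -- mirror case: apply lemA with poles (Q₁, P₁, Q₀, P₀) and points (y, x)
      have hx' : dist Q₀ y = dist Q₁ Q₀ - dist Q₁ y := by
        rw [dist_comm Q₁ Q₀, hQQ, hy]; ring
      have hy' : dist P₀ x = dist Q₁ Q₀ - dist P₁ x := by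
        rw [dist_comm Q₁ Q₀, hQQ, hx]; ring
      have hu' : dist P₁ x < dist Q₁ Q₀ := by
        rw [dist_comm Q₁ Q₀, hQQ, hx]; linarith [hd.2]
      have hau' : dist Q₁ Q₀ + dist P₁ x ≤ π := by
        rw [dist_comm Q₁ Q₀, hQQ, hx]; linarith [hd.1]
      have ha1' : dist Q₁ Q₀ < π := by rw [dist_comm Q₁ Q₀, hQQ]; exact ha1
      have := lemA hZ Q₁ P₁ Q₀ P₀ y x h₁' h₀' ha1' hx' hy' hu' hau'
      rw [dist_comm y x, hx, hy] at this
      have heq : |(dist P₀ P₁ - dist P₀ x) - (dist P₀ P₁ - dist Q₀ y)|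
          = |dist Q₀ y - dist P₀ x| := by
        congr 1; ring
      rw [heq] at this
      exact this
    · push_neg at hd
      by_cases hc : dist P₀ P₁ + dist P₀ x ≤ π
      · -- swapped case: apply lemA with poles (Q₀, P₀, Q₁, P₁) and points (y, x)
        have hslt : dist P₀ x < dist P₀ P₁ := by
          rcases lt_or_eq_of_le hsa with h | h
          · exact h
          · exfalso
            have h1 : 2 * dist P₀ P₁ - π ≤ dist P₀ x := by rw [← h]; linarith
            have := hd h1
            linarith [ha0, h]
        have hx' : dist Q₁ y = dist Q₀ Q₁ - dist Q₀ y := by rw [hQQ]; exact hy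
        have hy' : dist P₁ x = dist Q₀ Q₁ - dist P₀ x := by rw [hQQ]; exact hx
        have hu' : dist P₀ x < dist Q₀ Q₁ := by rw [hQQ]; exact hslt
        have hau' : dist Q₀ Q₁ + dist P₀ x ≤ π := by rw [hQQ]; exact hc
        have ha1' : dist Q₀ Q₁ < π := by rw [hQQ]; exact ha1
        have := lemA hZ Q₀ P₀ Q₁ P₁ y x h₀' h₁' ha1' hx' hy' hu' hau'
        rw [dist_comm y x, abs_sub_comm] at this
        exact this
      · -- recursion case
        push_neg at hc
        have hπa : 0 < π - dist P₀ P₁ := by linarith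
        have hsgt : 0 < dist P₀ x := by linarith
        have hslt2 : dist P₀ x < 2 * dist P₀ P₁ - π := by
          by_contra hcc
          push_neg at hcc
          exact absurd (hd hcc) (not_le.mpr hsgt)
        have hsa' : dist P₀ x < dist P₀ P₁ := by linarith
        clear hd
        obtain ⟨a, hadef⟩ : ∃ a, dist P₀ P₁ = a := ⟨_, rfl⟩
        obtain ⟨s, hsdef⟩ : ∃ s, dist P₀ x = s := ⟨_, rfl⟩
        obtain ⟨u, hudef⟩ : ∃ u, dist Q₀ y = u := ⟨_, rfl⟩
        rw [hadef] at hx hy hs hc hsa hua ha1 hπa hslt2 hsa'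
        rw [hsdef] at hx hs hc hsa hs0 hsgt hslt2 hsa'
        rw [hudef] at hy hua hu0
        rw [hsdef, hudef]
        -- midpoint of x and Q₁
        have hxQ1 : dist x Q₁ = π - (a - s) := by
          have := h₁ x; rw [hx] at this; linarith
        have hlt : dist x Q₁ < π := by rw [hxQ1]; linarith
        obtain ⟨m, hm1, hm2, hcomp⟩ := hZ x Q₁ hlt
        have hcoshalf : Real.cos (dist x Q₁ / 2) = Real.sin ((a - s) / 2) := by
          rw [hxQ1, show (π - (a - s)) / 2 = π / 2 - (a - s) / 2 by ring,
            Real.cos_pi_div_two_sub]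
        have hsinpos : 0 < Real.sin ((a - s) / 2) :=
          Real.sin_pos_of_pos_of_lt_pi (by linarith) (by nlinarith [Real.pi_pos])
        have hQ1P0 : dist Q₁ P₀ = π - a := by
          have := h₁ P₀; rw [dist_comm P₁ P₀, hadef] at this
          rw [dist_comm Q₁ P₀]; linarith
        have hP0Q1 : dist P₀ Q₁ = π - a := by rw [dist_comm P₀ Q₁]; exact hQ1P0
        -- comparison with p = P₀
        have hper1 : dist P₀ x + dist x Q₁ + dist Q₁ P₀ < 2 * π := by
          rw [hsdef, hxQ1, hQ1P0]; linarith
        have hc1 := hcomp P₀ hper1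
        rw [hsdef, hP0Q1, hcoshalf, Real.cos_pi_sub] at hc1
        have hprod : Real.cos s - Real.cos a
            = 2 * Real.sin ((a + s) / 2) * Real.sin ((a - s) / 2) := cos_diff_prod s a
        have hm0cos : Real.sin ((a + s) / 2) ≤ Real.cos (dist P₀ m) := by
          nlinarith [hc1, hprod, hsinpos]
        have hQ0m_eq : dist Q₀ m = π - dist P₀ m := by
          have := h₀ m; rw [dist_comm m Q₀] at this; linarith
        have hP0mpi : dist P₀ m ≤ π := by
          have := dist_nonneg (x := Q₀) (y := m); linarith [hQ0m_eq]
        have hP0mle : dist P₀ m ≤ (a + s - π) / 2 := by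
          refine le_of_cos_le_cos (by linarith) hP0mpi ?_
          rw [show (a + s - π) / 2 = -(π / 2 - (a + s) / 2) by ring, Real.cos_neg,
            Real.cos_pi_div_two_sub]
          exact hm0cos
        have hxm : dist x m = (π - (a - s)) / 2 := by rw [hm1, hxQ1]
        have hmQ1 : dist m Q₁ = (π - (a - s)) / 2 := by rw [hm2, hxQ1]
        have hP0mge : (a + s - π) / 2 ≤ dist P₀ m := by
          have htri : dist P₀ x ≤ dist P₀ m + dist m x := dist_triangle _ _ _
          rw [hsdef, dist_comm m x, hxm] at htri; linarith
        have hP0meq : dist P₀ m = (a + s - π) / 2 := le_antisymm hP0mle hP0mge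
        have hP1m : dist P₁ m = a - (a + s - π) / 2 := by
          have := h₁ m; rw [hmQ1] at this; linarith
        -- apply induction hypothesis to (m, y)
        have hxm' : dist P₁ m = dist P₀ P₁ - dist P₀ m := by
          rw [hadef, hP1m, hP0meq]
        have hy' : dist Q₁ y = dist P₀ P₁ - dist Q₀ y := by rw [hadef, hudef]; exact hy
        have hsm : dist P₀ m ≤ n * ((π - dist P₀ P₁) / 2) := by
          rw [hadef, hP0meq]
          have hn0 : (0:ℝ) ≤ (n:ℝ) * (π - a) :=
            mul_nonneg (Nat.cast_nonneg n) (by linarith)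
          have hs' : s ≤ ((n:ℝ) + 1) * ((π - a) / 2) := by push_cast at hs; linarith
          linarith [hn0, hs']
        have hmy := ih m y hxm' hy' hsm
        rw [hudef, hP0meq] at hmy
        -- now derive the contradiction
        by_contra hcon
        push_neg at hcon
        obtain ⟨D, hDdef⟩ : ∃ D, dist x y = D := ⟨_, rfl⟩
        rw [hDdef] at hcon
        have hD0 : 0 ≤ D := hDdef ▸ dist_nonneg
        have habs1 : u - s ≤ |u - s| := le_abs_self _
        have habs2 : s - u ≤ |u - s| := by rw [abs_sub_comm]; exact le_abs_self _
        -- bound dist y m from above by π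
        have hymub : dist y m ≤ π := by
          rcases le_or_gt ((a + s - π) / 2) u with h | h
          · have htri : dist y m ≤ dist y Q₁ + dist Q₁ m := dist_triangle _ _ _
            rw [dist_comm y Q₁, hy, dist_comm Q₁ m, hmQ1] at htri
            linarith
          · have htri : dist y m ≤ dist y Q₀ + dist Q₀ m := dist_triangle _ _ _
            rw [dist_comm y Q₀, hudef, hQ0m_eq, hP0meq] at htri
            linarith
        have hymlb : π - |u - (a + s - π) / 2| ≤ dist y m := by
          rw [dist_comm y m]; exact hmy
        have habspi : |u - (a + s - π) / 2| ≤ π := by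
          rw [abs_le]; constructor <;> [linarith; linarith]
        have hcosym : Real.cos (dist y m) ≤ Real.cos (π - |u - (a + s - π) / 2|) :=
          Real.cos_le_cos_of_nonneg_of_le_pi (by linarith) hymub hymlb
        have hcosym' : Real.cos (dist y m) ≤ -Real.cos (u - (a + s - π) / 2) := by
          rw [Real.cos_pi_sub, Real.cos_abs] at hcosym
          exact hcosym
        -- final comparison with p = y
        have hper2 : dist y x + dist x Q₁ + dist Q₁ y < 2 * π := by
          rw [dist_comm y x, hDdef, hxQ1, hy]; linarith
        have hc2 := hcomp y hper2
        rw [dist_comm y x, hDdef, dist_comm y Q₁, hy, hcoshalf] at hc2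
        have htrig : 2 * Real.sin ((a - s) / 2) * Real.cos (u - (a + s - π) / 2)
            = Real.cos (u - s) - Real.cos (a - u) := by
          rw [two_sin_mul_cos,
            show (a - s) / 2 + (u - (a + s - π) / 2) = π / 2 + (u - s) by ring,
            show (a - s) / 2 - (u - (a + s - π) / 2) = (a - u) - π / 2 by ring,
            sin_pi_div_two_add', sin_sub_pi_div_two']
          ring
        have hchain : (Real.cos D + Real.cos (a - u)) / 2
            ≤ (-Real.cos (u - (a + s - π) / 2)) * Real.sin ((a - s) / 2) :=
          le_trans hc2 (mul_le_mul_of_nonneg_right hcosym' (le_of_lt hsinpos))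
        have hcomm : (-Real.cos (u - (a + s - π) / 2)) * Real.sin ((a - s) / 2)
            = -(Real.sin ((a - s) / 2) * Real.cos (u - (a + s - π) / 2)) := by ring
        have hfin : Real.cos D ≤ -Real.cos (u - s) := by
          linarith [hchain, htrig, hcomm.le, hcomm.ge]
        have hlhs : Real.cos (π - |u - s|) = -Real.cos (u - s) := by
          rw [Real.cos_pi_sub, Real.cos_abs]
        have habsle : |u - s| ≤ π := by
          rw [abs_le]; constructor <;> [linarith; linarith]
        have hpile : π - |u - s| ≤ π := by linarith [abs_nonneg (u - s)]
        have : Real.cos (π - |u - s|) < Real.cos D :=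
          Real.cos_lt_cos_of_nonneg_of_le_pi hD0 hpile hcon
        rw [hlhs] at this
        linarith

lemma core_eq {Z : Type*} [MetricSpace Z] (hZ : IsCATOne Z) (P₀ Q₀ P₁ Q₁ : Z)
    (h₀ : ∀ z : Z, dist P₀ z + dist z Q₀ = π)
    (h₁ : ∀ z : Z, dist P₁ z + dist z Q₁ = π)
    (ha0 : 0 < dist P₀ P₁) (ha1 : dist P₀ P₁ < π) (x y : Z)
    (hx : dist P₁ x = dist P₀ P₁ - dist P₀ x)
    (hy : dist Q₁ y = dist P₀ P₁ - dist Q₀ y) :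
    dist x y = π - |dist Q₀ y - dist P₀ x| := by
  have hπa : 0 < (π - dist P₀ P₁) / 2 := by linarith
  obtain ⟨n, hn⟩ := exists_nat_ge (dist P₀ x / ((π - dist P₀ P₁) / 2))
  have hs : dist P₀ x ≤ n * ((π - dist P₀ P₁) / 2) := by
    rw [div_le_iff₀ hπa] at hn
    linarith
  have hlb := core_lb hZ P₀ Q₀ P₁ Q₁ h₀ h₁ ha0 ha1 n x y hx hy hs
  have hP0y : dist P₀ y = π - dist Q₀ y := by
    have := h₀ y; rw [dist_comm y Q₀] at this; linarith
  have hP1y : dist P₁ y = π - (dist P₀ P₁ - dist Q₀ y) := by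
    have := h₁ y; rw [dist_comm y Q₁, hy] at this; linarith
  have ht1 : dist x y ≤ dist x P₀ + dist P₀ y := dist_triangle _ _ _
  have ht2 : dist x y ≤ dist x P₁ + dist P₁ y := dist_triangle _ _ _
  rw [dist_comm x P₀, hP0y] at ht1
  rw [dist_comm x P₁, hx, hP1y] at ht2
  have hub : dist x y ≤ π - |dist Q₀ y - dist P₀ x| := by
    rcases abs_cases (dist Q₀ y - dist P₀ x) with ⟨h, _⟩ | ⟨h, _⟩ <;> rw [h] <;> linarith
  linarith [hlb, hub]

noncomputable def circleMap4 {Z : Type*} (γ₁ γ₂ γ₃ γ₄ : ℝ → Z) (A : ℝ) (x : ℝ) : Z :=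
  if x ≤ A then γ₁ x else if x ≤ π then γ₂ (x - A)
  else if x ≤ π + A then γ₃ (x - π) else γ₄ (x - (π + A))

set_option maxHeartbeats 1000000 in
lemma circleMap4_dist {Z : Type*} [MetricSpace Z] (γ₁ γ₂ γ₃ γ₄ : ℝ → Z) (A : ℝ)
    (hA0 : 0 < A) (hA1 : A < π)
    (D11 : ∀ t₁ ∈ Set.Icc (0:ℝ) A, ∀ t₂ ∈ Set.Icc (0:ℝ) A,
      dist (γ₁ t₁) (γ₁ t₂) = |t₁ - t₂|)
    (D22 : ∀ t₁ ∈ Set.Icc (0:ℝ) (π - A), ∀ t₂ ∈ Set.Icc (0:ℝ) (π - A),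
      dist (γ₂ t₁) (γ₂ t₂) = |t₁ - t₂|)
    (D33 : ∀ t₁ ∈ Set.Icc (0:ℝ) A, ∀ t₂ ∈ Set.Icc (0:ℝ) A,
      dist (γ₃ t₁) (γ₃ t₂) = |t₁ - t₂|)
    (D44 : ∀ t₁ ∈ Set.Icc (0:ℝ) (π - A), ∀ t₂ ∈ Set.Icc (0:ℝ) (π - A),
      dist (γ₄ t₁) (γ₄ t₂) = |t₁ - t₂|)
    (D12 : ∀ t₁ ∈ Set.Icc (0:ℝ) A, ∀ t₂ ∈ Set.Icc (0:ℝ) (π - A),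
      dist (γ₁ t₁) (γ₂ t₂) = A + t₂ - t₁)
    (D13 : ∀ t₁ ∈ Set.Icc (0:ℝ) A, ∀ t₂ ∈ Set.Icc (0:ℝ) A,
      dist (γ₁ t₁) (γ₃ t₂) = π - |t₂ - t₁|)
    (D14 : ∀ t₁ ∈ Set.Icc (0:ℝ) A, ∀ t₂ ∈ Set.Icc (0:ℝ) (π - A),
      dist (γ₁ t₁) (γ₄ t₂) = π - A - t₂ + t₁)
    (D23 : ∀ t₁ ∈ Set.Icc (0:ℝ) (π - A), ∀ t₂ ∈ Set.Icc (0:ℝ) A,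
      dist (γ₂ t₁) (γ₃ t₂) = π - A - t₁ + t₂)
    (D24 : ∀ t₁ ∈ Set.Icc (0:ℝ) (π - A), ∀ t₂ ∈ Set.Icc (0:ℝ) (π - A),
      dist (γ₂ t₁) (γ₄ t₂) = π - |t₂ - t₁|)
    (D34 : ∀ t₁ ∈ Set.Icc (0:ℝ) A, ∀ t₂ ∈ Set.Icc (0:ℝ) (π - A),
      dist (γ₃ t₁) (γ₄ t₂) = A - t₁ + t₂) :
    ∀ x₁ x₂ : ℝ, 0 ≤ x₁ → x₂ < 2 * π → x₁ ≤ x₂ →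
      dist (circleMap4 γ₁ γ₂ γ₃ γ₄ A x₁) (circleMap4 γ₁ γ₂ γ₃ γ₄ A x₂)
        = π - |x₂ - x₁ - π| := by
  intro x₁ x₂ h0 h2 hle
  have hπ : 0 < π := Real.pi_pos
  rcases le_or_gt x₁ A with hb1 | hb1
  · rcases le_or_gt x₂ A with hc1 | hc1
    · -- (1,1)
      simp only [circleMap4, if_pos hb1, if_pos hc1]
      rw [D11 x₁ ⟨h0, hb1⟩ x₂ ⟨by linarith, hc1⟩,
        abs_of_nonpos (by linarith : x₁ - x₂ ≤ 0),
        abs_of_nonpos (by linarith : x₂ - x₁ - π ≤ 0)]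
      ring
    · rcases le_or_gt x₂ π with hc2 | hc2
      · -- (1,2)
        simp only [circleMap4, if_pos hb1, if_neg (not_le.mpr hc1), if_pos hc2]
        rw [D12 x₁ ⟨h0, hb1⟩ (x₂ - A) ⟨by linarith, by linarith⟩,
          abs_of_nonpos (by linarith : x₂ - x₁ - π ≤ 0)]
        ring
      · rcases le_or_gt x₂ (π + A) with hc3 | hc3
        · -- (1,3)
          simp only [circleMap4, if_pos hb1, if_neg (not_le.mpr hc1),
            if_neg (not_le.mpr hc2), if_pos hc3]
          rw [D13 x₁ ⟨h0, hb1⟩ (x₂ - π) ⟨by linarith, by linarith⟩,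
            show x₂ - π - x₁ = x₂ - x₁ - π by ring]
        · -- (1,4)
          simp only [circleMap4, if_pos hb1, if_neg (not_le.mpr hc1),
            if_neg (not_le.mpr hc2), if_neg (not_le.mpr hc3)]
          rw [D14 x₁ ⟨h0, hb1⟩ (x₂ - (π + A)) ⟨by linarith, by linarith⟩,
            abs_of_nonneg (by linarith : 0 ≤ x₂ - x₁ - π)]
          ring
  · rcases le_or_gt x₁ π with hb2 | hb2
    · rcases le_or_gt x₂ A with hc1 | hc1
      · linarith
      · rcases le_or_gt x₂ π with hc2 | hc2
        · -- (2,2)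
          simp only [circleMap4, if_neg (not_le.mpr hb1), if_pos hb2,
            if_neg (not_le.mpr hc1), if_pos hc2]
          rw [D22 (x₁ - A) ⟨by linarith, by linarith⟩ (x₂ - A) ⟨by linarith, by linarith⟩,
            abs_of_nonpos (by linarith : x₁ - A - (x₂ - A) ≤ 0),
            abs_of_nonpos (by linarith : x₂ - x₁ - π ≤ 0)]
          ring
        · rcases le_or_gt x₂ (π + A) with hc3 | hc3
          · -- (2,3)
            simp only [circleMap4, if_neg (not_le.mpr hb1), if_pos hb2,
              if_neg (not_le.mpr hc1), if_neg (not_le.mpr hc2), if_pos hc3]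
            rw [D23 (x₁ - A) ⟨by linarith, by linarith⟩ (x₂ - π) ⟨by linarith, by linarith⟩,
              abs_of_nonpos (by linarith : x₂ - x₁ - π ≤ 0)]
            ring
          · -- (2,4)
            simp only [circleMap4, if_neg (not_le.mpr hb1), if_pos hb2,
              if_neg (not_le.mpr hc1), if_neg (not_le.mpr hc2), if_neg (not_le.mpr hc3)]
            rw [D24 (x₁ - A) ⟨by linarith, by linarith⟩
              (x₂ - (π + A)) ⟨by linarith, by linarith⟩,
              show x₂ - (π + A) - (x₁ - A) = x₂ - x₁ - π by ring]
    · rcases le_or_gt x₁ (π + A) with hb3 | hb3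
      · rcases le_or_gt x₂ A with hc1 | hc1
        · linarith
        · rcases le_or_gt x₂ π with hc2 | hc2
          · linarith
          · rcases le_or_gt x₂ (π + A) with hc3 | hc3
            · -- (3,3)
              simp only [circleMap4, if_neg (not_le.mpr hb1), if_neg (not_le.mpr hb2),
                if_pos hb3, if_neg (not_le.mpr hc1), if_neg (not_le.mpr hc2), if_pos hc3]
              rw [D33 (x₁ - π) ⟨by linarith, by linarith⟩
                (x₂ - π) ⟨by linarith, by linarith⟩,
                abs_of_nonpos (by linarith : x₁ - π - (x₂ - π) ≤ 0),
                abs_of_nonpos (by linarith : x₂ - x₁ - π ≤ 0)]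
              ring
            · -- (3,4)
              simp only [circleMap4, if_neg (not_le.mpr hb1), if_neg (not_le.mpr hb2),
                if_pos hb3, if_neg (not_le.mpr hc1), if_neg (not_le.mpr hc2),
                if_neg (not_le.mpr hc3)]
              rw [D34 (x₁ - π) ⟨by linarith, by linarith⟩
                (x₂ - (π + A)) ⟨by linarith, by linarith⟩,
                abs_of_nonpos (by linarith : x₂ - x₁ - π ≤ 0)]
              ring
      · rcases le_or_gt x₂ A with hc1 | hc1
        · linarith
        · rcases le_or_gt x₂ π with hc2 | hc2
          · linarith
          · rcases le_or_gt x₂ (π + A) with hc3 | hc3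
            · linarith
            · -- (4,4)
              simp only [circleMap4, if_neg (not_le.mpr hb1), if_neg (not_le.mpr hb2),
                if_neg (not_le.mpr hb3), if_neg (not_le.mpr hc1), if_neg (not_le.mpr hc2),
                if_neg (not_le.mpr hc3)]
              rw [D44 (x₁ - (π + A)) ⟨by linarith, by linarith⟩
                (x₂ - (π + A)) ⟨by linarith, by linarith⟩,
                abs_of_nonpos (by linarith : x₁ - (π + A) - (x₂ - (π + A)) ≤ 0),
                abs_of_nonpos (by linarith : x₂ - x₁ - π ≤ 0)]
              ring

set_option maxHeartbeats 2000000 in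
/-- Let `p₀,q₀` and `p₁,q₁` be two pairs of mutually opposite suspenders in a CAT(1)
space, with `0 < d(p₀,p₁) < π`.  Then the union `C₁` of the four geodesics
`p₀p₁ ∪ p₁q₀ ∪ q₀q₁ ∪ q₁p₀` is isometric to the round circle of circumference `2π`
(parametrized by a map `f : ℝ → Z` realizing the arc-length distance
`π - |2π·fract((s-t)/2π) - π|`); in particular, for distinct `i,j ∈ {0,1}` the
concatenations `pᵢpⱼ ∪ pⱼqᵢ` and `pᵢqⱼ ∪ qⱼqᵢ` are geodesics of length `π` from `pᵢ`
to `qᵢ`.  -/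
theorem stmt_13 {Z : Type*} [MetricSpace Z] (hZ : IsCATOne Z) (p₀ q₀ p₁ q₁ : Z)
    (h₀ : ∀ z : Z, dist p₀ z + dist z q₀ = π)
    (h₁ : ∀ z : Z, dist p₁ z + dist z q₁ = π)
    (hpos : 0 < dist p₀ p₁) (hlt : dist p₀ p₁ < π)
    (γ₁ γ₂ γ₃ γ₄ : ℝ → Z)
    (hγ₁ : IsGeodesic γ₁ 0 (dist p₀ p₁) ∧ γ₁ 0 = p₀ ∧ γ₁ (dist p₀ p₁) = p₁)
    (hγ₂ : IsGeodesic γ₂ 0 (dist p₁ q₀) ∧ γ₂ 0 = p₁ ∧ γ₂ (dist p₁ q₀) = q₀)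
    (hγ₃ : IsGeodesic γ₃ 0 (dist q₀ q₁) ∧ γ₃ 0 = q₀ ∧ γ₃ (dist q₀ q₁) = q₁)
    (hγ₄ : IsGeodesic γ₄ 0 (dist q₁ p₀) ∧ γ₄ 0 = q₁ ∧ γ₄ (dist q₁ p₀) = p₀) :
    (dist p₀ p₁ + dist p₁ q₀ = π ∧ dist p₀ q₁ + dist q₁ q₀ = π ∧
      dist p₁ p₀ + dist p₀ q₁ = π ∧ dist p₁ q₀ + dist q₀ q₁ = π) ∧
    ∃ f : ℝ → Z, f 0 = p₀ ∧
      (∀ s t : ℝ, dist (f s) (f t) = π - |2 * π * Int.fract ((s - t) / (2 * π)) - π|) ∧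
      Set.range f =
        γ₁ '' Set.Icc 0 (dist p₀ p₁) ∪ γ₂ '' Set.Icc 0 (dist p₁ q₀) ∪
          γ₃ '' Set.Icc 0 (dist q₀ q₁) ∪ γ₄ '' Set.Icc 0 (dist q₁ p₀) := by
  obtain ⟨hg1, h10, h1a⟩ := hγ₁
  obtain ⟨hg2, h20, h2a⟩ := hγ₂
  obtain ⟨hg3, h30, h3a⟩ := hγ₃
  obtain ⟨hg4, h40, h4a⟩ := hγ₄
  have hπ : (0:ℝ) < π := Real.pi_pos
  have h2π : (0:ℝ) < 2 * π := by linarith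
  -- basic suspender distances
  have haq : dist p₁ q₀ = π - dist p₀ p₁ := by have := h₀ p₁; linarith
  have hq0q1 : dist q₀ q₁ = dist p₀ p₁ := by
    have h1 := h₁ q₀; have h2 := h₀ p₁; linarith
  have hq1p0 : dist q₁ p₀ = π - dist p₀ p₁ := by
    have := h₁ p₀
    rw [dist_comm p₁ p₀] at this
    rw [dist_comm q₁ p₀]; linarith
  -- pole distances along the four geodesics
  have B1p0 : ∀ t ∈ Set.Icc (0:ℝ) (dist p₀ p₁), dist p₀ (γ₁ t) = t := by
    intro t ht
    have h := hg1 0 ⟨le_refl 0, dist_nonneg⟩ t ht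
    rw [h10] at h
    rw [h, zero_sub, abs_neg, abs_of_nonneg ht.1]
  have B1p1 : ∀ t ∈ Set.Icc (0:ℝ) (dist p₀ p₁), dist p₁ (γ₁ t) = dist p₀ p₁ - t := by
    intro t ht
    have h := hg1 (dist p₀ p₁) ⟨dist_nonneg, le_refl _⟩ t ht
    rw [h1a] at h
    rw [h, abs_of_nonneg (by linarith [ht.2])]
  have B1q0 : ∀ t ∈ Set.Icc (0:ℝ) (dist p₀ p₁), dist q₀ (γ₁ t) = π - t := by
    intro t ht
    have h := h₀ (γ₁ t)
    rw [B1p0 t ht, dist_comm (γ₁ t) q₀] at h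
    linarith
  have B1q1 : ∀ t ∈ Set.Icc (0:ℝ) (dist p₀ p₁),
      dist q₁ (γ₁ t) = π - (dist p₀ p₁ - t) := by
    intro t ht
    have h := h₁ (γ₁ t)
    rw [B1p1 t ht, dist_comm (γ₁ t) q₁] at h
    linarith
  have B2p1 : ∀ t ∈ Set.Icc (0:ℝ) (π - dist p₀ p₁), dist p₁ (γ₂ t) = t := by
    intro t ht
    have ht' : t ∈ Set.Icc (0:ℝ) (dist p₁ q₀) := by rw [haq]; exact ht
    have h := hg2 0 ⟨le_refl 0, dist_nonneg⟩ t ht'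
    rw [h20] at h
    rw [h, zero_sub, abs_neg, abs_of_nonneg ht.1]
  have B2q0 : ∀ t ∈ Set.Icc (0:ℝ) (π - dist p₀ p₁),
      dist q₀ (γ₂ t) = π - dist p₀ p₁ - t := by
    intro t ht
    have ht' : t ∈ Set.Icc (0:ℝ) (dist p₁ q₀) := by rw [haq]; exact ht
    have h := hg2 (dist p₁ q₀) ⟨dist_nonneg, le_refl _⟩ t ht'
    rw [h2a, haq] at h
    rw [h, abs_of_nonneg (by linarith [ht.2])]
  have B2p0 : ∀ t ∈ Set.Icc (0:ℝ) (π - dist p₀ p₁),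
      dist p₀ (γ₂ t) = dist p₀ p₁ + t := by
    intro t ht
    have h := h₀ (γ₂ t)
    rw [dist_comm (γ₂ t) q₀, B2q0 t ht] at h
    linarith
  have B2q1 : ∀ t ∈ Set.Icc (0:ℝ) (π - dist p₀ p₁), dist q₁ (γ₂ t) = π - t := by
    intro t ht
    have h := h₁ (γ₂ t)
    rw [B2p1 t ht, dist_comm (γ₂ t) q₁] at h
    linarith
  have B3q0 : ∀ t ∈ Set.Icc (0:ℝ) (dist p₀ p₁), dist q₀ (γ₃ t) = t := by
    intro t ht
    have ht' : t ∈ Set.Icc (0:ℝ) (dist q₀ q₁) := by rw [hq0q1]; exact ht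
    have h := hg3 0 ⟨le_refl 0, dist_nonneg⟩ t ht'
    rw [h30] at h
    rw [h, zero_sub, abs_neg, abs_of_nonneg ht.1]
  have B3q1 : ∀ t ∈ Set.Icc (0:ℝ) (dist p₀ p₁), dist q₁ (γ₃ t) = dist p₀ p₁ - t := by
    intro t ht
    have ht' : t ∈ Set.Icc (0:ℝ) (dist q₀ q₁) := by rw [hq0q1]; exact ht
    have h := hg3 (dist q₀ q₁) ⟨dist_nonneg, le_refl _⟩ t ht'
    rw [h3a, hq0q1] at h
    rw [h, abs_of_nonneg (by linarith [ht.2])]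
  have B3p0 : ∀ t ∈ Set.Icc (0:ℝ) (dist p₀ p₁), dist p₀ (γ₃ t) = π - t := by
    intro t ht
    have h := h₀ (γ₃ t)
    rw [dist_comm (γ₃ t) q₀, B3q0 t ht] at h
    linarith
  have B3p1 : ∀ t ∈ Set.Icc (0:ℝ) (dist p₀ p₁),
      dist p₁ (γ₃ t) = π - (dist p₀ p₁ - t) := by
    intro t ht
    have h := h₁ (γ₃ t)
    rw [dist_comm (γ₃ t) q₁, B3q1 t ht] at h
    linarith
  have B4q1 : ∀ t ∈ Set.Icc (0:ℝ) (π - dist p₀ p₁), dist q₁ (γ₄ t) = t := by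
    intro t ht
    have ht' : t ∈ Set.Icc (0:ℝ) (dist q₁ p₀) := by rw [hq1p0]; exact ht
    have h := hg4 0 ⟨le_refl 0, dist_nonneg⟩ t ht'
    rw [h40] at h
    rw [h, zero_sub, abs_neg, abs_of_nonneg ht.1]
  have B4p0 : ∀ t ∈ Set.Icc (0:ℝ) (π - dist p₀ p₁),
      dist p₀ (γ₄ t) = π - dist p₀ p₁ - t := by
    intro t ht
    have ht' : t ∈ Set.Icc (0:ℝ) (dist q₁ p₀) := by rw [hq1p0]; exact ht
    have h := hg4 (dist q₁ p₀) ⟨dist_nonneg, le_refl _⟩ t ht'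
    rw [h4a, hq1p0] at h
    rw [h, abs_of_nonneg (by linarith [ht.2])]
  have B4q0 : ∀ t ∈ Set.Icc (0:ℝ) (π - dist p₀ p₁),
      dist q₀ (γ₄ t) = dist p₀ p₁ + t := by
    intro t ht
    have h := h₀ (γ₄ t)
    rw [dist_comm (γ₄ t) q₀] at h
    have h2 := B4p0 t ht
    rw [h2] at h
    linarith
  have B4p1 : ∀ t ∈ Set.Icc (0:ℝ) (π - dist p₀ p₁), dist p₁ (γ₄ t) = π - t := by
    intro t ht
    have h := h₁ (γ₄ t)
    rw [dist_comm (γ₄ t) q₁, B4q1 t ht] at h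
    linarith
  -- the ten pairwise distance formulas
  have D11 : ∀ t₁ ∈ Set.Icc (0:ℝ) (dist p₀ p₁), ∀ t₂ ∈ Set.Icc (0:ℝ) (dist p₀ p₁),
      dist (γ₁ t₁) (γ₁ t₂) = |t₁ - t₂| := hg1
  have D22 : ∀ t₁ ∈ Set.Icc (0:ℝ) (π - dist p₀ p₁),
      ∀ t₂ ∈ Set.Icc (0:ℝ) (π - dist p₀ p₁), dist (γ₂ t₁) (γ₂ t₂) = |t₁ - t₂| := by
    intro t₁ ht₁ t₂ ht₂
    exact hg2 t₁ (by rw [haq]; exact ht₁) t₂ (by rw [haq]; exact ht₂)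
  have D33 : ∀ t₁ ∈ Set.Icc (0:ℝ) (dist p₀ p₁), ∀ t₂ ∈ Set.Icc (0:ℝ) (dist p₀ p₁),
      dist (γ₃ t₁) (γ₃ t₂) = |t₁ - t₂| := by
    intro t₁ ht₁ t₂ ht₂
    exact hg3 t₁ (by rw [hq0q1]; exact ht₁) t₂ (by rw [hq0q1]; exact ht₂)
  have D44 : ∀ t₁ ∈ Set.Icc (0:ℝ) (π - dist p₀ p₁),
      ∀ t₂ ∈ Set.Icc (0:ℝ) (π - dist p₀ p₁), dist (γ₄ t₁) (γ₄ t₂) = |t₁ - t₂| := by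
    intro t₁ ht₁ t₂ ht₂
    exact hg4 t₁ (by rw [hq1p0]; exact ht₁) t₂ (by rw [hq1p0]; exact ht₂)
  have D12 : ∀ t₁ ∈ Set.Icc (0:ℝ) (dist p₀ p₁),
      ∀ t₂ ∈ Set.Icc (0:ℝ) (π - dist p₀ p₁),
      dist (γ₁ t₁) (γ₂ t₂) = dist p₀ p₁ + t₂ - t₁ := by
    intro t₁ ht₁ t₂ ht₂
    apply le_antisymm
    · have h := dist_triangle (γ₁ t₁) p₁ (γ₂ t₂)
      rw [dist_comm (γ₁ t₁) p₁, B1p1 t₁ ht₁, B2p1 t₂ ht₂] at h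
      linarith
    · have h := dist_triangle q₀ (γ₂ t₂) (γ₁ t₁)
      rw [B2q0 t₂ ht₂, dist_comm (γ₂ t₂) (γ₁ t₁), B1q0 t₁ ht₁] at h
      linarith
  have D13 : ∀ t₁ ∈ Set.Icc (0:ℝ) (dist p₀ p₁), ∀ t₂ ∈ Set.Icc (0:ℝ) (dist p₀ p₁),
      dist (γ₁ t₁) (γ₃ t₂) = π - |t₂ - t₁| := by
    intro t₁ ht₁ t₂ ht₂
    have hx : dist p₁ (γ₁ t₁) = dist p₀ p₁ - dist p₀ (γ₁ t₁) := by
      rw [B1p0 t₁ ht₁, B1p1 t₁ ht₁]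
    have hy : dist q₁ (γ₃ t₂) = dist p₀ p₁ - dist q₀ (γ₃ t₂) := by
      rw [B3q0 t₂ ht₂, B3q1 t₂ ht₂]
    have h := core_eq hZ p₀ q₀ p₁ q₁ h₀ h₁ hpos hlt (γ₁ t₁) (γ₃ t₂) hx hy
    rw [B3q0 t₂ ht₂, B1p0 t₁ ht₁] at h
    exact h
  have D14 : ∀ t₁ ∈ Set.Icc (0:ℝ) (dist p₀ p₁),
      ∀ t₂ ∈ Set.Icc (0:ℝ) (π - dist p₀ p₁),
      dist (γ₁ t₁) (γ₄ t₂) = π - dist p₀ p₁ - t₂ + t₁ := by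
    intro t₁ ht₁ t₂ ht₂
    apply le_antisymm
    · have h := dist_triangle (γ₁ t₁) p₀ (γ₄ t₂)
      rw [dist_comm (γ₁ t₁) p₀, B1p0 t₁ ht₁, B4p0 t₂ ht₂] at h
      linarith
    · have h := dist_triangle p₁ (γ₁ t₁) (γ₄ t₂)
      rw [B4p1 t₂ ht₂, B1p1 t₁ ht₁] at h
      linarith
  have D23 : ∀ t₁ ∈ Set.Icc (0:ℝ) (π - dist p₀ p₁),
      ∀ t₂ ∈ Set.Icc (0:ℝ) (dist p₀ p₁),
      dist (γ₂ t₁) (γ₃ t₂) = π - dist p₀ p₁ - t₁ + t₂ := by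
    intro t₁ ht₁ t₂ ht₂
    apply le_antisymm
    · have h := dist_triangle (γ₂ t₁) q₀ (γ₃ t₂)
      rw [dist_comm (γ₂ t₁) q₀, B2q0 t₁ ht₁, B3q0 t₂ ht₂] at h
      linarith
    · have h := dist_triangle q₁ (γ₃ t₂) (γ₂ t₁)
      rw [B2q1 t₁ ht₁, B3q1 t₂ ht₂, dist_comm (γ₃ t₂) (γ₂ t₁)] at h
      linarith
  have D24 : ∀ t₁ ∈ Set.Icc (0:ℝ) (π - dist p₀ p₁),
      ∀ t₂ ∈ Set.Icc (0:ℝ) (π - dist p₀ p₁),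
      dist (γ₂ t₁) (γ₄ t₂) = π - |t₂ - t₁| := by
    intro t₁ ht₁ t₂ ht₂
    have h₀' : ∀ z : Z, dist q₀ z + dist z p₀ = π := by
      intro z; rw [dist_comm q₀ z, dist_comm z p₀]; linarith [h₀ z]
    have ha0' : 0 < dist p₁ q₀ := by rw [haq]; linarith
    have ha1' : dist p₁ q₀ < π := by rw [haq]; linarith
    have hx : dist q₀ (γ₂ t₁) = dist p₁ q₀ - dist p₁ (γ₂ t₁) := by
      rw [B2q0 t₁ ht₁, B2p1 t₁ ht₁, haq]
    have hy : dist p₀ (γ₄ t₂) = dist p₁ q₀ - dist q₁ (γ₄ t₂) := by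
      rw [B4p0 t₂ ht₂, B4q1 t₂ ht₂, haq]
    have h := core_eq hZ p₁ q₁ q₀ p₀ h₁ h₀' ha0' ha1' (γ₂ t₁) (γ₄ t₂) hx hy
    rw [B4q1 t₂ ht₂, B2p1 t₁ ht₁] at h
    exact h
  have D34 : ∀ t₁ ∈ Set.Icc (0:ℝ) (dist p₀ p₁),
      ∀ t₂ ∈ Set.Icc (0:ℝ) (π - dist p₀ p₁),
      dist (γ₃ t₁) (γ₄ t₂) = dist p₀ p₁ - t₁ + t₂ := by
    intro t₁ ht₁ t₂ ht₂
    apply le_antisymm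
    · have h := dist_triangle (γ₃ t₁) q₁ (γ₄ t₂)
      rw [dist_comm (γ₃ t₁) q₁, B3q1 t₁ ht₁, B4q1 t₂ ht₂] at h
      linarith
    · have h := dist_triangle p₀ (γ₄ t₂) (γ₃ t₁)
      rw [B3p0 t₁ ht₁, B4p0 t₂ ht₂, dist_comm (γ₄ t₂) (γ₃ t₁)] at h
      linarith
  refine ⟨⟨h₀ p₁, ?_, h₁ p₀, h₁ q₀⟩, ?_⟩
  · rw [dist_comm p₀ q₁, dist_comm q₁ q₀, hq1p0, hq0q1]; ring
  have KD := circleMap4_dist γ₁ γ₂ γ₃ γ₄ (dist p₀ p₁) hpos hlt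
    D11 D22 D33 D44 D12 D13 D14 D23 D24 D34
  have hne : (2 * π) ≠ 0 := ne_of_gt h2π
  have hsmall : ∀ θ : ℝ, 0 ≤ θ → θ < 2 * π → 2 * π * Int.fract (θ / (2 * π)) = θ := by
    intro θ hθ1 hθ2
    rw [Int.fract_eq_self.mpr ⟨div_nonneg hθ1 (le_of_lt h2π), (div_lt_one h2π).mpr hθ2⟩]
    field_simp
  refine ⟨fun θ => circleMap4 γ₁ γ₂ γ₃ γ₄ (dist p₀ p₁) (2 * π * Int.fract (θ / (2 * π))),
    ?_, ?_, ?_⟩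
  · show circleMap4 γ₁ γ₂ γ₃ γ₄ (dist p₀ p₁) (2 * π * Int.fract ((0:ℝ) / (2 * π))) = p₀
    rw [zero_div, Int.fract_zero, mul_zero]
    simp only [circleMap4, if_pos (le_of_lt hpos)]
    exact h10
  · intro s t
    show dist (circleMap4 γ₁ γ₂ γ₃ γ₄ (dist p₀ p₁) (2 * π * Int.fract (s / (2 * π))))
        (circleMap4 γ₁ γ₂ γ₃ γ₄ (dist p₀ p₁) (2 * π * Int.fract (t / (2 * π))))
        = π - |2 * π * Int.fract ((s - t) / (2 * π)) - π|
    have hX0s : 0 ≤ 2 * π * Int.fract (s / (2 * π)) :=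
      mul_nonneg (le_of_lt h2π) (Int.fract_nonneg _)
    have hX0t : 0 ≤ 2 * π * Int.fract (t / (2 * π)) :=
      mul_nonneg (le_of_lt h2π) (Int.fract_nonneg _)
    have hX2s : 2 * π * Int.fract (s / (2 * π)) < 2 * π := by
      have := (mul_lt_mul_iff_right₀ h2π).mpr (Int.fract_lt_one (s / (2 * π)))
      rwa [mul_one] at this
    have hX2t : 2 * π * Int.fract (t / (2 * π)) < 2 * π := by
      have := (mul_lt_mul_iff_right₀ h2π).mpr (Int.fract_lt_one (t / (2 * π)))
      rwa [mul_one] at this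
    have hfr : Int.fract ((s - t) / (2 * π))
        = Int.fract ((2 * π * Int.fract (s / (2 * π))
            - 2 * π * Int.fract (t / (2 * π))) / (2 * π)) := by
      rw [Int.fract_eq_fract]
      refine ⟨⌊s / (2 * π)⌋ - ⌊t / (2 * π)⌋, ?_⟩
      push_cast
      simp only [Int.fract]
      field_simp
      ring
    rcases le_or_gt (2 * π * Int.fract (t / (2 * π)))
        (2 * π * Int.fract (s / (2 * π))) with hc | hc
    · have hsv : Int.fract ((2 * π * Int.fract (s / (2 * π))
          - 2 * π * Int.fract (t / (2 * π))) / (2 * π))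
          = (2 * π * Int.fract (s / (2 * π)) - 2 * π * Int.fract (t / (2 * π))) / (2 * π) := by
        apply Int.fract_eq_self.mpr
        constructor
        · exact div_nonneg (by linarith) (le_of_lt h2π)
        · rw [div_lt_one h2π]; linarith
      have harg : 2 * π * ((2 * π * Int.fract (s / (2 * π))
          - 2 * π * Int.fract (t / (2 * π))) / (2 * π))
          = 2 * π * Int.fract (s / (2 * π)) - 2 * π * Int.fract (t / (2 * π)) := by
        field_simp
      rw [hfr, hsv, harg, dist_comm]
      exact KD _ _ hX0t hX2s hc
    · have hsv : Int.fract ((2 * π * Int.fract (s / (2 * π))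
          - 2 * π * Int.fract (t / (2 * π))) / (2 * π))
          = (2 * π * Int.fract (s / (2 * π)) - 2 * π * Int.fract (t / (2 * π))) / (2 * π)
            + 1 := by
        rw [← Int.fract_add_one]
        apply Int.fract_eq_self.mpr
        constructor
        · have h1 : (-1 : ℝ) < (2 * π * Int.fract (s / (2 * π))
              - 2 * π * Int.fract (t / (2 * π))) / (2 * π) := by
            rw [lt_div_iff₀ h2π]; linarith
          linarith
        · have h1 : (2 * π * Int.fract (s / (2 * π))
              - 2 * π * Int.fract (t / (2 * π))) / (2 * π) < 0 :=
            div_neg_of_neg_of_pos (by linarith) h2π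
          linarith
      have harg : 2 * π * ((2 * π * Int.fract (s / (2 * π))
          - 2 * π * Int.fract (t / (2 * π))) / (2 * π) + 1)
          = 2 * π * Int.fract (s / (2 * π)) - 2 * π * Int.fract (t / (2 * π)) + 2 * π := by
        field_simp
      rw [hfr, hsv, harg]
      have habs : |2 * π * Int.fract (s / (2 * π)) - 2 * π * Int.fract (t / (2 * π))
          + 2 * π - π|
          = |2 * π * Int.fract (t / (2 * π)) - 2 * π * Int.fract (s / (2 * π)) - π| := by
        rw [show 2 * π * Int.fract (s / (2 * π)) - 2 * π * Int.fract (t / (2 * π))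
            + 2 * π - π
            = -(2 * π * Int.fract (t / (2 * π)) - 2 * π * Int.fract (s / (2 * π)) - π)
          by ring, abs_neg]
      rw [habs]
      exact KD _ _ hX0s hX2t (le_of_lt hc)
  · ext z
    simp only [Set.mem_range, Set.mem_union, Set.mem_image]
    constructor
    · rintro ⟨θ, rfl⟩
      have hX0 : 0 ≤ 2 * π * Int.fract (θ / (2 * π)) :=
        mul_nonneg (le_of_lt h2π) (Int.fract_nonneg _)
      have hX2 : 2 * π * Int.fract (θ / (2 * π)) < 2 * π := by
        have := (mul_lt_mul_iff_right₀ h2π).mpr (Int.fract_lt_one (θ / (2 * π)))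
        rwa [mul_one] at this
      rcases le_or_gt (2 * π * Int.fract (θ / (2 * π))) (dist p₀ p₁) with hb | hb
      · exact Or.inl (Or.inl (Or.inl ⟨2 * π * Int.fract (θ / (2 * π)), ⟨hX0, hb⟩, by
          simp only [circleMap4, if_pos hb]⟩))
      · rcases le_or_gt (2 * π * Int.fract (θ / (2 * π))) π with hb2 | hb2
        · exact Or.inl (Or.inl (Or.inr ⟨2 * π * Int.fract (θ / (2 * π)) - dist p₀ p₁,
            ⟨by linarith, by rw [haq]; linarith⟩, by
            simp only [circleMap4, if_neg (not_le.mpr hb), if_pos hb2]⟩))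
        · rcases le_or_gt (2 * π * Int.fract (θ / (2 * π))) (π + dist p₀ p₁) with hb3 | hb3
          · exact Or.inl (Or.inr ⟨2 * π * Int.fract (θ / (2 * π)) - π,
              ⟨by linarith, by rw [hq0q1]; linarith⟩, by
              simp only [circleMap4, if_neg (not_le.mpr hb), if_neg (not_le.mpr hb2),
                if_pos hb3]⟩)
          · exact Or.inr ⟨2 * π * Int.fract (θ / (2 * π)) - (π + dist p₀ p₁),
              ⟨by linarith, by rw [hq1p0]; linarith⟩, by
              simp only [circleMap4, if_neg (not_le.mpr hb), if_neg (not_le.mpr hb2),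
                if_neg (not_le.mpr hb3)]⟩
    · rintro (((⟨t, ht, rfl⟩ | ⟨t, ht, rfl⟩) | ⟨t, ht, rfl⟩) | ⟨t, ht, rfl⟩)
      · refine ⟨t, ?_⟩
        show circleMap4 γ₁ γ₂ γ₃ γ₄ (dist p₀ p₁) (2 * π * Int.fract (t / (2 * π))) = γ₁ t
        rw [hsmall t ht.1 (by linarith [ht.2])]
        simp only [circleMap4, if_pos ht.2]
      · have ht1 : 0 ≤ t := ht.1
        have ht2 : t ≤ π - dist p₀ p₁ := haq ▸ ht.2
        rcases eq_or_lt_of_le ht1 with h0 | h0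
        · refine ⟨dist p₀ p₁, ?_⟩
          show circleMap4 γ₁ γ₂ γ₃ γ₄ (dist p₀ p₁)
            (2 * π * Int.fract (dist p₀ p₁ / (2 * π))) = γ₂ t
          rw [hsmall (dist p₀ p₁) (le_of_lt hpos) (by linarith)]
          simp only [circleMap4, if_pos (le_refl (dist p₀ p₁))]
          rw [h1a, ← h0, h20]
        · refine ⟨dist p₀ p₁ + t, ?_⟩
          show circleMap4 γ₁ γ₂ γ₃ γ₄ (dist p₀ p₁)
            (2 * π * Int.fract ((dist p₀ p₁ + t) / (2 * π))) = γ₂ t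
          rw [hsmall (dist p₀ p₁ + t) (by linarith) (by linarith)]
          simp only [circleMap4,
            if_neg (not_le.mpr (by linarith : dist p₀ p₁ < dist p₀ p₁ + t)),
            if_pos (by linarith : dist p₀ p₁ + t ≤ π)]
          rw [show dist p₀ p₁ + t - dist p₀ p₁ = t by ring]
      · have ht1 : 0 ≤ t := ht.1
        have ht2 : t ≤ dist p₀ p₁ := hq0q1 ▸ ht.2
        rcases eq_or_lt_of_le ht1 with h0 | h0
        · refine ⟨π, ?_⟩
          show circleMap4 γ₁ γ₂ γ₃ γ₄ (dist p₀ p₁) (2 * π * Int.fract (π / (2 * π))) = γ₃ t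
          rw [hsmall π (le_of_lt hπ) (by linarith)]
          simp only [circleMap4, if_neg (not_le.mpr hlt), if_pos (le_refl π)]
          have h2a' : γ₂ (π - dist p₀ p₁) = q₀ := by rw [← haq]; exact h2a
          rw [h2a', ← h0, h30]
        · refine ⟨π + t, ?_⟩
          show circleMap4 γ₁ γ₂ γ₃ γ₄ (dist p₀ p₁)
            (2 * π * Int.fract ((π + t) / (2 * π))) = γ₃ t
          rw [hsmall (π + t) (by linarith) (by linarith)]
          simp only [circleMap4, if_neg (not_le.mpr (by linarith : dist p₀ p₁ < π + t)),
            if_neg (not_le.mpr (by linarith : π < π + t)),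
            if_pos (by linarith : π + t ≤ π + dist p₀ p₁)]
          rw [show π + t - π = t by ring]
      · have ht1 : 0 ≤ t := ht.1
        have ht2 : t ≤ π - dist p₀ p₁ := hq1p0 ▸ ht.2
        rcases eq_or_lt_of_le ht2 with hend | hend
        · refine ⟨0, ?_⟩
          show circleMap4 γ₁ γ₂ γ₃ γ₄ (dist p₀ p₁)
            (2 * π * Int.fract ((0:ℝ) / (2 * π))) = γ₄ t
          rw [hsmall 0 le_rfl h2π]
          simp only [circleMap4, if_pos (le_of_lt hpos)]
          have h4a' : γ₄ (π - dist p₀ p₁) = p₀ := by rw [← hq1p0]; exact h4a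
          rw [h10, hend, h4a']
        · rcases eq_or_lt_of_le ht1 with h0 | h0
          · refine ⟨π + dist p₀ p₁, ?_⟩
            show circleMap4 γ₁ γ₂ γ₃ γ₄ (dist p₀ p₁)
              (2 * π * Int.fract ((π + dist p₀ p₁) / (2 * π))) = γ₄ t
            rw [hsmall (π + dist p₀ p₁) (by linarith) (by linarith)]
            simp only [circleMap4, if_neg (not_le.mpr (by linarith : dist p₀ p₁ < π + dist p₀ p₁)),
              if_neg (not_le.mpr (by linarith : π < π + dist p₀ p₁)),
              if_pos (le_refl (π + dist p₀ p₁))]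
            have h3a' : γ₃ (dist p₀ p₁) = q₁ := by rw [← hq0q1]; exact h3a
            rw [show π + dist p₀ p₁ - π = dist p₀ p₁ by ring, h3a', ← h0, h40]
          · refine ⟨π + dist p₀ p₁ + t, ?_⟩
            show circleMap4 γ₁ γ₂ γ₃ γ₄ (dist p₀ p₁)
              (2 * π * Int.fract ((π + dist p₀ p₁ + t) / (2 * π))) = γ₄ t
            rw [hsmall (π + dist p₀ p₁ + t) (by linarith) (by linarith)]
            simp only [circleMap4,
              if_neg (not_le.mpr (by linarith : dist p₀ p₁ < π + dist p₀ p₁ + t)),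
              if_neg (not_le.mpr (by linarith : π < π + dist p₀ p₁ + t)),
              if_neg (not_le.mpr (by linarith : π + dist p₀ p₁ < π + dist p₀ p₁ + t))]
            rw [show π + dist p₀ p₁ + t - (π + dist p₀ p₁) = t by ring]
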